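/- Fix an integer n ≥ 2 and let τ_2, ..., τ_n be independent random variables, where τ_k is exponentially distributed with rate λ_k = k(k-1)/2. Then T_n := Σ_{k=2}^{n} τ_k has distribution function P(T_n ≤ t) = 1 - Σ_{k=2}^{n} a_{nk} e^{-λ_k t} for all t ≥ 0, where a_{nk} := (-1)^k (2k-1) n!(n-1)! / ((n-k)!(n+k-1)!). -/

import Mathlib

open MeasureTheory ProbabilityTheory

open Finset Real


noncomputable def Acoef (n k : ℕ) : ℝ :=
  (-1 : ℝ) ^ k * (2 * (k : ℝ) - 1) * (n.factorial : ℝ) * ((n - 1).factorial : ℝ) /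
    (((n - k).factorial : ℝ) * ((n + k - 1).factorial : ℝ))

noncomputable def Lrate (k : ℕ) : ℝ := (k : ℝ) * ((k : ℝ) - 1) / 2

lemma Lrate_eq (s : ℕ) : Lrate (s + 2) = ((s : ℝ) + 2) * ((s : ℝ) + 1) / 2 := by
  unfold Lrate; push_cast; ring

lemma Lrate_pos (s : ℕ) : 0 < Lrate (s + 2) := by
  rw [Lrate_eq]; positivity

lemma Lrate_sub (s d : ℕ) :
    Lrate (s + d + 3) - Lrate (s + 2) = ((2 * (s:ℝ) + d + 4) * ((d:ℝ) + 1)) / 2 := by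
  unfold Lrate; push_cast; ring

lemma Lrate_sub_pos (s d : ℕ) : 0 < Lrate (s + d + 3) - Lrate (s + 2) := by
  rw [Lrate_sub]; positivity

lemma fact_cast_succ (a : ℕ) : ((a + 1).factorial : ℝ) = ((a : ℝ) + 1) * (a.factorial : ℝ) := by
  rw [Nat.factorial_succ]; push_cast; ring

lemma fact_pos' (a : ℕ) : (0:ℝ) < (a.factorial : ℝ) := by
  exact_mod_cast a.factorial_pos

lemma Acoef_eq (s d : ℕ) :
    Acoef (s + d + 2) (s + 2)
      = (-1 : ℝ) ^ s * (2 * (s:ℝ) + 3) * ((s + d + 2).factorial : ℝ) *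
          ((s + d + 1).factorial : ℝ) / ((d.factorial : ℝ) * ((2 * s + d + 3).factorial : ℝ)) := by
  unfold Acoef
  rw [show s + d + 2 - (s + 2) = d by omega, show s + d + 2 + (s + 2) - 1 = 2 * s + d + 3 by omega,
    show s + d + 2 - 1 = s + d + 1 by omega, show s + 2 = s + 1 + 1 by omega]
  rw [pow_succ, pow_succ]
  push_cast
  ring

lemma Acoef_succ_ratio (s d : ℕ) :
    Acoef (s + d + 3) (s + 2)
      = Acoef (s + d + 2) (s + 2) * (Lrate (s + d + 3) / (Lrate (s + d + 3) - Lrate (s + 2))) := by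
  have e1 := Acoef_eq s (d + 1)
  rw [show s + (d + 1) + 2 = s + d + 3 by omega] at e1
  rw [e1, Acoef_eq s d, Lrate_sub, show s + d + 3 = (s + d + 1) + 2 by omega, Lrate_eq]
  set M : ℝ := ((s + d + 1).factorial : ℝ) with hM
  set D : ℝ := (d.factorial : ℝ) with hD
  set K : ℝ := ((2 * s + d + 3).factorial : ℝ) with hK
  have f1 : ((s + d + 3).factorial : ℝ) = ((s:ℝ) + d + 3) * (((s:ℝ) + d + 2) * M) := by
    rw [hM, show s + d + 3 = (s + d + 1 + 1) + 1 by omega, fact_cast_succ, fact_cast_succ]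
    push_cast; ring
  have f2 : ((s + (d + 1) + 1).factorial : ℝ) = ((s:ℝ) + d + 2) * M := by
    rw [hM, show s + (d + 1) + 1 = (s + d + 1) + 1 by omega, fact_cast_succ]
    push_cast; ring
  have f3 : (((d + 1)).factorial : ℝ) = ((d:ℝ) + 1) * D := by
    rw [hD, fact_cast_succ]
  have f4 : ((2 * s + (d + 1) + 3).factorial : ℝ) = (2 * (s:ℝ) + d + 4) * K := by
    rw [hK, show 2 * s + (d + 1) + 3 = (2 * s + d + 3) + 1 by omega, fact_cast_succ]
    push_cast; ring
  have f5 : ((s + d + 2).factorial : ℝ) = ((s:ℝ) + d + 2) * M := by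
    rw [hM, show s + d + 2 = (s + d + 1) + 1 by omega, fact_cast_succ]
    push_cast; ring
  rw [f1, f2, f3, f4, f5]
  have hDne : D ≠ 0 := ne_of_gt (fact_pos' d)
  have hKne : K ≠ 0 := ne_of_gt (fact_pos' _)
  have hMne : M ≠ 0 := ne_of_gt (fact_pos' _)
  have hd1 : ((d:ℝ) + 1) ≠ 0 := by positivity
  have h2sd : (2 * (s:ℝ) + d + 4) ≠ 0 := by positivity
  have hnum : ((2 * (s:ℝ) + ↑d + 4) * ((d:ℝ) + 1)) / 2 ≠ 0 := by positivity
  field_simp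
  push_cast; ring

lemma Acoef_sum_closed (s : ℕ) : ∀ e : ℕ,
    ∑ k ∈ Icc 2 (s + 2), Acoef (s + 2 + e) k
      = 1 + (-1 : ℝ) ^ s * ((s : ℝ) + 2) * (e : ℝ) * ((s + 2 + e).factorial : ℝ) *
          ((s + e).factorial : ℝ) / ((e.factorial : ℝ) * ((2 * s + e + 3).factorial : ℝ)) := by
  induction s with
  | zero =>
    intro e
    rw [show (0:ℕ) + 2 = 2 from rfl, Finset.Icc_self, Finset.sum_singleton]
    have e1 := Acoef_eq 0 e
    rw [show 0 + e + 2 = 2 + e by omega] at e1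
    rw [e1]
    set E : ℝ := (e.factorial : ℝ) with hE
    have f1 : ((2 + e).factorial : ℝ) = ((e:ℝ) + 2) * (((e:ℝ) + 1) * E) := by
      rw [hE, show 2 + e = (e + 1) + 1 by omega, fact_cast_succ, fact_cast_succ]; push_cast; ring
    have f2 : ((0 + e + 1).factorial : ℝ) = ((e:ℝ) + 1) * E := by
      rw [hE, show 0 + e + 1 = e + 1 by omega, fact_cast_succ]
    have f3 : ((2 * 0 + e + 3).factorial : ℝ) = ((e:ℝ)+3) * (((e:ℝ)+2) * (((e:ℝ)+1) * E)) := by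
      rw [hE, show 2 * 0 + e + 3 = ((e + 1) + 1) + 1 by omega, fact_cast_succ, fact_cast_succ,
        fact_cast_succ]
      push_cast; ring
    have f4 : ((0 + e).factorial : ℝ) = E := by rw [hE, show 0 + e = e by omega]
    rw [f1, f2, f3, f4]
    have hEne : E ≠ 0 := ne_of_gt (fact_pos' e)
    have c1 : ((e:ℝ) + 1) ≠ 0 := by positivity
    have c2 : ((e:ℝ) + 2) ≠ 0 := by positivity
    have c3 : ((e:ℝ) + 3) ≠ 0 := by positivity
    field_simp
    ring
  | succ s ih =>
    intro e
    have hins : Finset.Icc 2 (s + 1 + 2) = insert (s + 3) (Finset.Icc 2 (s + 2)) := by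
      rw [show s + 1 + 2 = (s + 2) + 1 by omega, ← Finset.insert_Icc_right_eq_Icc_add_one (by omega)]
    rw [hins, Finset.sum_insert (by simp)]
    have ihe := ih (e + 1)
    rw [show s + 2 + (e + 1) = s + 1 + 2 + e by omega] at ihe
    rw [ihe]
    have e1 := Acoef_eq (s + 1) e
    rw [show s + 1 + e + 2 = s + 1 + 2 + e by omega] at e1
    rw [e1]
    set B : ℝ := ((s + e).factorial : ℝ) with hB
    set E : ℝ := (e.factorial : ℝ) with hE
    set K : ℝ := ((2 * s + e + 3).factorial : ℝ) with hK
    have f1 : ((s + 1 + 2 + e).factorial : ℝ)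
        = ((s:ℝ)+e+3) * (((s:ℝ)+e+2) * (((s:ℝ)+e+1) * B)) := by
      rw [hB, show s + 1 + 2 + e = (((s + e) + 1) + 1) + 1 by omega, fact_cast_succ,
        fact_cast_succ, fact_cast_succ]
      push_cast; ring
    have f2 : ((s + (e + 1)).factorial : ℝ) = ((s:ℝ)+e+1) * B := by
      rw [hB, show s + (e + 1) = (s + e) + 1 by omega, fact_cast_succ]; push_cast; ring
    have f3 : ((e + 1).factorial : ℝ) = ((e:ℝ)+1) * E := by rw [hE, fact_cast_succ]
    have f4 : ((2 * s + (e + 1) + 3).factorial : ℝ) = (2*(s:ℝ)+e+4) * K := by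
      rw [hK, show 2 * s + (e + 1) + 3 = (2 * s + e + 3) + 1 by omega, fact_cast_succ]
      push_cast; ring
    have f5 : ((s + 1 + e + 1).factorial : ℝ) = ((s:ℝ)+e+2) * (((s:ℝ)+e+1) * B) := by
      rw [hB, show s + 1 + e + 1 = ((s + e) + 1) + 1 by omega, fact_cast_succ, fact_cast_succ]
      push_cast; ring
    have f6 : ((2 * (s + 1) + e + 3).factorial : ℝ) = (2*(s:ℝ)+e+5) * ((2*(s:ℝ)+e+4) * K) := by
      rw [hK, show 2 * (s + 1) + e + 3 = ((2 * s + e + 3) + 1) + 1 by omega, fact_cast_succ,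
        fact_cast_succ]
      push_cast; ring
    have f7 : ((s + 1 + e).factorial : ℝ) = ((s:ℝ)+e+1) * B := by
      rw [hB, show s + 1 + e = (s + e) + 1 by omega, fact_cast_succ]; push_cast; ring
    rw [f1, f2, f3, f4, f5, f6, f7]
    have hBne : B ≠ 0 := ne_of_gt (fact_pos' _)
    have hEne : E ≠ 0 := ne_of_gt (fact_pos' _)
    have hKne : K ≠ 0 := ne_of_gt (fact_pos' _)
    have c1 : ((s:ℝ)+e+1) ≠ 0 := by positivity
    have c2 : ((s:ℝ)+e+2) ≠ 0 := by positivity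
    have c3 : ((s:ℝ)+e+3) ≠ 0 := by positivity
    have c4 : ((e:ℝ)+1) ≠ 0 := by positivity
    have c5 : (2*(s:ℝ)+e+4) ≠ 0 := by positivity
    have c6 : (2*(s:ℝ)+e+5) ≠ 0 := by positivity
    rw [pow_succ]
    push_cast
    field_simp
    ring

lemma Acoef_total (s : ℕ) : ∑ k ∈ Icc 2 (s + 2), Acoef (s + 2) k = 1 := by
  have h := Acoef_sum_closed s 0
  simpa using h

lemma expPDFReal_eq (r x : ℝ) :
    exponentialPDFReal r x = if 0 ≤ x then r * Real.exp (-(r * x)) else 0 := by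
  unfold exponentialPDFReal gammaPDFReal
  simp only [rpow_one, Real.Gamma_one, div_one, sub_self, Real.rpow_zero, one_mul, mul_one]

lemma expPDFReal_nonneg {r : ℝ} (hr : 0 < r) (x : ℝ) : 0 ≤ exponentialPDFReal r x :=
  exponentialPDFReal_nonneg hr x

lemma integrable_expPDFReal {r : ℝ} (hr : 0 < r) :
    Integrable (exponentialPDFReal r) := by
  refine ⟨(stronglyMeasurable_exponentialPDFReal r).aestronglyMeasurable, ?_⟩
  rw [hasFiniteIntegral_iff_ofReal (Filter.Eventually.of_forall (expPDFReal_nonneg hr))]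
  have : ∫⁻ x, ENNReal.ofReal (exponentialPDFReal r x) = 1 := by
    simpa [exponentialPDF] using lintegral_exponentialPDF_eq_one hr
  rw [this]; exact ENNReal.one_lt_top

lemma integral_expPDFReal {r : ℝ} (hr : 0 < r) :
    ∫ x, exponentialPDFReal r x = 1 := by
  have h := ofReal_integral_eq_lintegral_ofReal (integrable_expPDFReal hr)
    (Filter.Eventually.of_forall (expPDFReal_nonneg hr))
  have h2 : ∫⁻ x, ENNReal.ofReal (exponentialPDFReal r x) = 1 := by
    simpa [exponentialPDF] using lintegral_exponentialPDF_eq_one hr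
  rw [h2] at h
  have hnn : 0 ≤ ∫ x, exponentialPDFReal r x :=
    integral_nonneg (expPDFReal_nonneg hr)
  have := ENNReal.ofReal_eq_one.mp h
  linarith [this]

lemma conv_step {Ω : Type*} [MeasureSpace Ω] [IsProbabilityMeasure (ℙ : Measure Ω)]
    (X S : Ω → ℝ) (hX : Measurable X) (hS : Measurable S)
    (hind : IndepFun X S ℙ) {r : ℝ} (hr : 0 < r)
    (hXd : Measure.map X ℙ = expMeasure r)
    (G : ℝ → ℝ) (hGm : Measurable G) (hG0 : ∀ u, 0 ≤ G u) (hG1 : ∀ u, G u ≤ 1)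
    (hSd : ∀ u, ℙ {ω | S ω ≤ u} = ENNReal.ofReal (G u)) (t : ℝ) :
    ℙ {ω | X ω + S ω ≤ t}
      = ENNReal.ofReal (∫ x, exponentialPDFReal r x * G (t - x)) ∧
      Integrable (fun x => exponentialPDFReal r x * G (t - x)) := by
  have hGm' : Measurable fun x => G (t - x) := hGm.comp (measurable_const.sub measurable_id)
  have hInt : Integrable (fun x => exponentialPDFReal r x * G (t - x)) := by
    have := (integrable_expPDFReal hr).bdd_mul (f := fun x => G (t - x))
      (c := 1) hGm'.aestronglyMeasurable (Filter.Eventually.of_forall fun x => by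
        rw [Real.norm_eq_abs, abs_of_nonneg (hG0 _)]; exact hG1 _)
    simpa [mul_comm] using this
  refine ⟨?_, hInt⟩
  have hmap : Measure.map (fun ω => (X ω, S ω)) ℙ = (Measure.map X ℙ).prod (Measure.map S ℙ) :=
    (indepFun_iff_map_prod_eq_prod_map_map hX.aemeasurable hS.aemeasurable).mp hind
  have hE : MeasurableSet {p : ℝ × ℝ | p.1 + p.2 ≤ t} :=
    measurableSet_le (measurable_fst.add measurable_snd) measurable_const
  have step1 : ℙ {ω | X ω + S ω ≤ t}
      = ((Measure.map X ℙ).prod (Measure.map S ℙ)) {p : ℝ × ℝ | p.1 + p.2 ≤ t} := by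
    rw [← hmap, Measure.map_apply (hX.prodMk hS) hE]
    rfl
  rw [step1, Measure.prod_apply hE]
  have step2 : ∀ x : ℝ, (Measure.map S ℙ) (Prod.mk x ⁻¹' {p : ℝ × ℝ | p.1 + p.2 ≤ t})
      = ENNReal.ofReal (G (t - x)) := by
    intro x
    have hpre : (Prod.mk x ⁻¹' {p : ℝ × ℝ | p.1 + p.2 ≤ t}) = Set.Iic (t - x) := by
      ext y
      simp only [Set.mem_preimage, Set.mem_setOf_eq, Set.mem_Iic]
      constructor <;> intro h <;> linarith
    rw [hpre, Measure.map_apply hS measurableSet_Iic]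
    exact hSd (t - x)
  simp_rw [step2]
  have hXd' : Measure.map X ℙ = volume.withDensity (exponentialPDF r) := hXd
  have hpdfm : Measurable (exponentialPDF r) := (measurable_exponentialPDFReal r).ennreal_ofReal
  rw [hXd', lintegral_withDensity_eq_lintegral_mul volume hpdfm hGm'.ennreal_ofReal]
  have step3 : ∀ x : ℝ, (exponentialPDF r * fun x => ENNReal.ofReal (G (t - x))) x
      = ENNReal.ofReal (exponentialPDFReal r x * G (t - x)) := by
    intro x
    simp only [Pi.mul_apply, exponentialPDF]
    rw [← ENNReal.ofReal_mul (expPDFReal_nonneg hr x)]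
  simp_rw [step3]
  rw [← ofReal_integral_eq_lintegral_ofReal hInt
    (Filter.Eventually.of_forall fun x => mul_nonneg (expPDFReal_nonneg hr x) (hG0 _))]
lemma int_exp (r t : ℝ) :
    ∫ x in (0:ℝ)..t, r * Real.exp (-(r * x)) = 1 - Real.exp (-(r * t)) := by
  have h := intervalIntegral.integral_eq_sub_of_hasDerivAt
    (f := fun x : ℝ => -Real.exp (-(r * x))) (f' := fun x : ℝ => r * Real.exp (-(r * x)))
    (a := 0) (b := t) (fun x _ => hasDerivAt_neg_exp_mul_exp)
    (Continuous.intervalIntegrable (by fun_prop) 0 t)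
  rw [h]; simp; ring

lemma int_exp2 (r l t : ℝ) (hrl : l ≠ r) :
    ∫ x in (0:ℝ)..t, r * Real.exp (-(r * x)) * Real.exp (-(l * (t - x)))
      = r / (r - l) * (Real.exp (-(l * t)) - Real.exp (-(r * t))) := by
  have hlr : l - r ≠ 0 := sub_ne_zero.mpr hrl
  have hd : ∀ x : ℝ, HasDerivAt
      (fun x : ℝ => r / (l - r) * (Real.exp (-(l * t)) * Real.exp ((l - r) * x)))
      (r * Real.exp (-(r * x)) * Real.exp (-(l * (t - x)))) x := by
    intro x
    have h1 : HasDerivAt (fun x : ℝ => (l - r) * x) (l - r) x := by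
      simpa using (hasDerivAt_id x).const_mul (l - r)
    have h2 := h1.exp
    have h3 := (h2.const_mul (Real.exp (-(l * t)))).const_mul (r / (l - r))
    refine h3.congr_deriv (Eq.symm ?_)
    have he : Real.exp (-(r * x)) * Real.exp (-(l * (t - x)))
        = Real.exp (-(l * t)) * Real.exp ((l - r) * x) := by
      rw [← Real.exp_add, ← Real.exp_add]; congr 1; ring
    rw [mul_assoc, he]
    field_simp
  have h := intervalIntegral.integral_eq_sub_of_hasDerivAt (a := 0) (b := t)
    (fun x _ => hd x) (Continuous.intervalIntegrable (by fun_prop) 0 t)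
  rw [h]
  have he2 : Real.exp (-(l * t)) * Real.exp ((l - r) * t) = Real.exp (-(r * t)) := by
    rw [← Real.exp_add]; congr 1; ring
  rw [he2, mul_zero, Real.exp_zero, mul_one]
  have hrl2 : r - l ≠ 0 := fun hc => hrl (by linarith [sub_eq_zero.mp hc])
  field_simp
  ring

noncomputable def Gfun (j : ℕ) (t : ℝ) : ℝ :=
  if 0 ≤ t then 1 - ∑ k ∈ Icc 2 (j + 1), Acoef (j + 1) k * Real.exp (-(Lrate k * t)) else 0

lemma Gfun_neg {j : ℕ} {t : ℝ} (h : t < 0) : Gfun j t = 0 := if_neg (not_le.mpr h)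

lemma Gfun_measurable (j : ℕ) : Measurable (Gfun j) := by
  unfold Gfun
  exact Measurable.ite (measurableSet_le measurable_const measurable_id)
    (by fun_prop) measurable_const

lemma Gfun_step (j : ℕ) (t : ℝ) :
    ∫ x, exponentialPDFReal (Lrate (j + 2)) x * Gfun j (t - x) = Gfun (j + 1) t := by
  have hr : 0 < Lrate (j + 2) := Lrate_pos j
  set r := Lrate (j + 2) with hrdef
  by_cases ht : 0 ≤ t
  · -- main case
    have hCong : (fun x => exponentialPDFReal r x * Gfun j (t - x)) =ᵐ[volume]
        (Set.Ioc 0 t).indicator (fun x => r * Real.exp (-(r * x)) *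
          (1 - ∑ k ∈ Icc 2 (j + 1), Acoef (j + 1) k * Real.exp (-(Lrate k * (t - x))))) := by
      have h0 : (volume : Measure ℝ) {(0 : ℝ)} = 0 := measure_singleton 0
      filter_upwards [compl_mem_ae_iff.mpr h0] with x hx
      simp only [Set.mem_compl_iff, Set.mem_singleton_iff] at hx
      rcases lt_or_gt_of_ne hx with hneg | hpos
      · rw [expPDFReal_eq, if_neg (not_le.mpr hneg), zero_mul,
          Set.indicator_of_notMem (fun hc => absurd hc.1 (not_lt.mpr hneg.le))]
      · by_cases hxt : x ≤ t
        · rw [Set.indicator_of_mem (Set.mem_Ioc.mpr ⟨hpos, hxt⟩), expPDFReal_eq, if_pos hpos.le, Gfun,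
            if_pos (by linarith)]
        · rw [Gfun_neg (by linarith), mul_zero,
            Set.indicator_of_notMem (fun hc => hxt hc.2)]
    rw [integral_congr_ae hCong, integral_indicator measurableSet_Ioc,
      ← intervalIntegral.integral_of_le ht]
    have hexpand : ∀ x : ℝ, r * Real.exp (-(r * x)) *
        (1 - ∑ k ∈ Icc 2 (j + 1), Acoef (j + 1) k * Real.exp (-(Lrate k * (t - x))))
        = r * Real.exp (-(r * x)) - ∑ k ∈ Icc 2 (j + 1),
            Acoef (j + 1) k * (r * Real.exp (-(r * x)) * Real.exp (-(Lrate k * (t - x)))) := by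
      intro x
      rw [mul_sub, mul_one, Finset.mul_sum]
      congr 1
      exact Finset.sum_congr rfl fun k _ => by ring
    simp_rw [hexpand]
    rw [intervalIntegral.integral_sub (Continuous.intervalIntegrable (by fun_prop) 0 t)
      (Continuous.intervalIntegrable (continuous_finset_sum _ fun k _ => by fun_prop) 0 t)]
    rw [intervalIntegral.integral_finset_sum
      (fun k _ => (Continuous.intervalIntegrable (by fun_prop) 0 t))]
    rw [int_exp]
    have hsum : ∑ k ∈ Icc 2 (j + 1),
          (∫ x in (0:ℝ)..t, Acoef (j + 1) k * (r * Real.exp (-(r * x)) * Real.exp (-(Lrate k * (t - x)))))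
        = ∑ k ∈ Icc 2 (j + 1),
            Acoef (j + 2) k * (Real.exp (-(Lrate k * t)) - Real.exp (-(r * t))) := by
      refine Finset.sum_congr rfl fun k hk => ?_
      simp only [Finset.mem_Icc] at hk
      obtain ⟨s, rfl⟩ : ∃ s, k = s + 2 := ⟨k - 2, by omega⟩
      obtain ⟨d, rfl⟩ : ∃ d, j = s + d + 1 := ⟨j - s - 1, by omega⟩
      have hne : Lrate (s + 2) ≠ r := by
        rw [hrdef, show s + d + 1 + 2 = s + d + 3 by omega]
        have := Lrate_sub_pos s d
        intro hc; rw [← hc] at this; simp at this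
      rw [intervalIntegral.integral_const_mul, int_exp2 r (Lrate (s + 2)) t hne]
      have hratio := Acoef_succ_ratio s d
      rw [show s + d + 1 + 2 = s + d + 3 by omega, show s + d + 1 + 1 = s + d + 2 by omega,
        hrdef, show s + d + 1 + 2 = s + d + 3 by omega] at *
      rw [hratio]
      ring
    rw [hsum]
    have hIcc : Finset.Icc 2 (j + 2) = insert (j + 2) (Finset.Icc 2 (j + 1)) := by
      rw [show j + 2 = (j + 1) + 1 by omega, ← Finset.insert_Icc_right_eq_Icc_add_one (by omega)]
    have htot : Acoef (j + 2) (j + 2) + ∑ k ∈ Icc 2 (j + 1), Acoef (j + 2) k = 1 := by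
      have h := Acoef_total j
      rw [hIcc, Finset.sum_insert (by simp)] at h
      exact h
    rw [Gfun, if_pos ht, show j + 1 + 1 = j + 2 by omega, hIcc,
      Finset.sum_insert (by simp)]
    simp_rw [mul_sub]
    rw [Finset.sum_sub_distrib, ← Finset.sum_mul]
    rw [← hrdef]
    linear_combination (Real.exp (-(r * t))) * htot
  · -- t < 0
    have hz : ∀ x : ℝ, exponentialPDFReal r x * Gfun j (t - x) = 0 := by
      intro x
      by_cases hx : 0 ≤ x
      · rw [Gfun_neg (by linarith [not_le.mp ht]), mul_zero]
      · rw [expPDFReal_eq, if_neg hx, zero_mul]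
    simp only [hz, integral_zero, Gfun_neg (not_le.mp ht)]
lemma integrable_pdf_mul_G {r : ℝ} (hr : 0 < r) {G : ℝ → ℝ} (hGm : Measurable G)
    (hG0 : ∀ u, 0 ≤ G u) (hG1 : ∀ u, G u ≤ 1) (t : ℝ) :
    Integrable (fun x => exponentialPDFReal r x * G (t - x)) := by
  have hGm' : Measurable fun x => G (t - x) := hGm.comp (measurable_const.sub measurable_id)
  have := (integrable_expPDFReal hr).bdd_mul (f := fun x => G (t - x))
    (c := 1) hGm'.aestronglyMeasurable (Filter.Eventually.of_forall fun x => by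
      rw [Real.norm_eq_abs, abs_of_nonneg (hG0 _)]; exact hG1 _)
  simpa [mul_comm] using this

lemma Gfun_bounds (j : ℕ) : ∀ t : ℝ, 0 ≤ Gfun j t ∧ Gfun j t ≤ 1 := by
  induction j with
  | zero =>
    intro t
    unfold Gfun
    rw [Finset.Icc_eq_empty (by omega), Finset.sum_empty]
    constructor <;> split_ifs <;> norm_num
  | succ j ih =>
    intro t
    have hr : 0 < Lrate (j + 2) := Lrate_pos j
    rw [← Gfun_step j t]
    have hint := integrable_pdf_mul_G hr (Gfun_measurable j)
      (fun u => (ih u).1) (fun u => (ih u).2) t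
    constructor
    · exact integral_nonneg fun x => mul_nonneg (expPDFReal_nonneg hr x) ((ih _).1)
    · calc ∫ x, exponentialPDFReal (Lrate (j + 2)) x * Gfun j (t - x)
          ≤ ∫ x, exponentialPDFReal (Lrate (j + 2)) x := by
            refine integral_mono hint (integrable_expPDFReal hr) fun x => ?_
            exact mul_le_of_le_one_right (expPDFReal_nonneg hr x) (ih (t - x)).2
        _ = 1 := integral_expPDFReal hr

/-- Fix `n ≥ 2` and let `τ_2, …, τ_n` be independent random variables, `τ_k`
exponential with rate `λ_k = k(k-1)/2` (here `τ i` for `i : Fin (n-1)` stands for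
`τ_{i+2}`).  Then `T_n := Σ_{k=2}^n τ_k` has distribution function
`P(T_n ≤ t) = 1 - Σ_{k=2}^n a_{nk} e^{-λ_k t}` for `t ≥ 0`, where
`a_{nk} = (-1)^k (2k-1) n!(n-1)!/((n-k)!(n+k-1)!)`. -/
theorem stmt_8 {Ω : Type*} [MeasureSpace Ω] [IsProbabilityMeasure (ℙ : Measure Ω)]
    (n : ℕ) (hn : 2 ≤ n)
    (τ : Fin (n - 1) → Ω → ℝ) (hmeas : ∀ i, Measurable (τ i))
    (hind : iIndepFun τ ℙ)
    (hdist : ∀ i : Fin (n - 1), Measure.map (τ i) ℙ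
      = expMeasure ((((i : ℕ) : ℝ) + 2) * (((i : ℕ) : ℝ) + 1) / 2)) :
    ∀ t : ℝ, 0 ≤ t →
      (ℙ {ω | ∑ i, τ i ω ≤ t}).toReal
        = 1 - ∑ k ∈ Finset.Icc 2 n,
            ((-1 : ℝ) ^ k * (2 * (k : ℝ) - 1) * (n.factorial : ℝ) * ((n - 1).factorial : ℝ) /
                (((n - k).factorial : ℝ) * ((n + k - 1).factorial : ℝ))) *
              Real.exp (-((k : ℝ) * ((k : ℝ) - 1) / 2) * t) := by
  intro t ht
  set F : ℕ → Finset (Fin (n - 1)) := fun j => Finset.univ.filter (fun i => (i : ℕ) < j)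
    with hF
  have key : ∀ j, j ≤ n - 1 →
      ∀ u : ℝ, ℙ {ω | ∑ i ∈ F j, τ i ω ≤ u} = ENNReal.ofReal (Gfun j u) := by
    intro j
    induction j with
    | zero =>
      intro _ u
      have hF0 : F 0 = ∅ := by
        ext i; simp [hF]
      rw [hF0]
      simp only [Finset.sum_empty]
      unfold Gfun
      rw [Finset.Icc_eq_empty (by omega), Finset.sum_empty]
      by_cases h0 : (0 : ℝ) ≤ u
      · have : {ω : Ω | (0 : ℝ) ≤ u} = Set.univ := by ext ω; simpa using h0
        rw [this, if_pos h0]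
        simp
      · have : {ω : Ω | (0 : ℝ) ≤ u} = ∅ := by ext ω; simpa using h0
        rw [this, if_neg h0]
        simp
    | succ j ih =>
      intro hj u
      have hjn : j < n - 1 := by omega
      set i0 : Fin (n - 1) := ⟨j, hjn⟩ with hi0
      have hnot : i0 ∉ F j := by simp [hF, hi0]
      have hFins : F (j + 1) = insert i0 (F j) := by
        ext i
        simp only [hF, Finset.mem_filter, Finset.mem_univ, true_and, Finset.mem_insert]
        constructor
        · intro h
          rcases Nat.lt_succ_iff_lt_or_eq.mp h with h' | h'
          · exact Or.inr h'
          · exact Or.inl (Fin.ext h')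
        · rintro (rfl | h)
          · exact Nat.lt_succ_self j
          · exact Nat.lt_succ_of_lt h
      have hSm : Measurable (fun ω => ∑ i ∈ F j, τ i ω) :=
        Finset.measurable_sum _ fun i _ => hmeas i
      have hfunsum : (∑ i ∈ F j, τ i) = fun ω => ∑ i ∈ F j, τ i ω := by
        funext ω; exact Finset.sum_apply ω (F j) τ
      have hindep : IndepFun (τ i0) (fun ω => ∑ i ∈ F j, τ i ω) ℙ := by
        have h := (hind.indepFun_finset_sum_of_notMem hmeas hnot).symm
        rwa [hfunsum] at h
      have hr : 0 < Lrate (j + 2) := Lrate_pos j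
      have hXd : Measure.map (τ i0) ℙ = expMeasure (Lrate (j + 2)) := by
        rw [hdist i0, Lrate_eq]
      have hstep := conv_step (τ i0) (fun ω => ∑ i ∈ F j, τ i ω) (hmeas i0) hSm
        hindep hr hXd (Gfun j) (Gfun_measurable j)
        (fun v => (Gfun_bounds j v).1) (fun v => (Gfun_bounds j v).2)
        (ih (by omega)) u
      have hset : {ω : Ω | ∑ i ∈ F (j + 1), τ i ω ≤ u}
          = {ω : Ω | τ i0 ω + ∑ i ∈ F j, τ i ω ≤ u} := by
        ext ω
        simp only [Set.mem_setOf_eq, hFins, Finset.sum_insert hnot]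
      rw [hset, hstep.1, Gfun_step j u]
  have hxuniv : F (n - 1) = Finset.univ := by
    ext i; simp [hF, i.isLt]
  have hmain := key (n - 1) le_rfl t
  rw [hxuniv] at hmain
  rw [hmain, ENNReal.toReal_ofReal (Gfun_bounds (n - 1) t).1]
  unfold Gfun
  rw [if_pos ht, show n - 1 + 1 = n by omega]
  congr 1
  refine Finset.sum_congr rfl fun k _ => ?_
  rw [Acoef, Lrate, neg_mul]
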